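/- With E_S(α) as above, for each a ∈ S define λ_a : E_S(α) → E_S(α + a) induced by sending a word w = a'₁⋯a'_{i-1} a a'_{i+1}⋯a'_n (where a occurs in position i) to (−1)^{α(a'₁)+⋯+α(a'_{i-1})} w, and similarly ρ_a using the letters after a. Then for distinct a, b ∈ S: λ_a λ_b = −λ_b λ_a, ρ_a ρ_b = −ρ_b ρ_a, and λ_a ρ_b = ρ_b λ_a as maps E_S(α) → E_S(α+a+b). -/

import Mathlib

/-- Total orderings of `S`, encoded as words (lists) in which every element of `S`
occurs exactly once. -/
def OrdWord (S : Type) : Type := {l : List S // l.Nodup ∧ ∀ s : S, s ∈ l}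

/-- The sign `(−1)^e` for `e : ZMod 2`. -/
def signZ2 (k : Type) [CommRing k] (e : ZMod 2) : k := (-1 : k) ^ e.val

/-- Generators of the submodule of relations defining `E_S(α)`. -/
def relSet (k : Type) [CommRing k] (S : Type) (α : S → ZMod 2) :
    Set (OrdWord S →₀ k) :=
  {y | ∃ (l₁ l₂ : List S) (a b : S) (w w' : OrdWord S),
    w.1 = l₁ ++ a :: b :: l₂ ∧ w'.1 = l₁ ++ b :: a :: l₂ ∧
    y = Finsupp.single w 1 - signZ2 k (α a * α b) • Finsupp.single w' 1}

/-- The submodule of relations defining `E_S(α)`. -/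
noncomputable def relMod (k : Type) [CommRing k] (S : Type) (α : S → ZMod 2) :
    Submodule k (OrdWord S →₀ k) :=
  Submodule.span k (relSet k S α)

/-- `E_S(α)`, the module of `α`-weighted signs on `S`. -/
abbrev EMod (k : Type) [CommRing k] (S : Type) (α : S → ZMod 2) : Type :=
  (OrdWord S →₀ k) ⧸ relMod k S α

/-- The class `[w] ∈ E_S(α)` of a word `w`. -/
noncomputable def mkE (k : Type) [CommRing k] (S : Type) (α : S → ZMod 2)
    (w : OrdWord S) : EMod k S α :=
  Submodule.Quotient.mk (Finsupp.single w 1)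

/-- The weight function `α` with the value at `a` flipped (i.e. `α + a`). -/
def flipAt (S : Type) [DecidableEq S] (α : S → ZMod 2) (a : S) : S → ZMod 2 :=
  fun s => if s = a then α s + 1 else α s

/-- The sum of the `α`-weights of the letters preceding `a` in the word `w`. -/
def preSum (S : Type) [DecidableEq S] (α : S → ZMod 2) (a : S) (w : OrdWord S) :
    ZMod 2 :=
  ((w.1.takeWhile (fun s => s ≠ a)).map α).sum

/-- The sum of the `α`-weights of the letters following `a` in the word `w`. -/
def sufSum (S : Type) [DecidableEq S] (α : S → ZMod 2) (a : S) (w : OrdWord S) :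
    ZMod 2 :=
  (((w.1.dropWhile (fun s => s ≠ a)).drop 1).map α).sum


lemma aux_dropWhile_mem {S : Type} [DecidableEq S] (a : S) :
    ∀ l : List S, a ∈ l →
      l.dropWhile (fun s => s ≠ a) = a :: ((l.dropWhile (fun s => s ≠ a)).drop 1)
  | x :: t, h => by
    by_cases hx : x = a
    · subst hx
      rw [List.dropWhile_cons, if_neg (by simp)]
      simp
    · have ht : a ∈ t := by
        rcases List.mem_cons.1 h with h' | h'
        · exact absurd h'.symm hx
        · exact h'
      rw [List.dropWhile_cons, if_pos (by simpa using hx)]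
      exact aux_dropWhile_mem a t ht

lemma aux_count_split {S : Type} [DecidableEq S] (a b : S) (hab : b ≠ a)
    (l : List S) (ha : a ∈ l) :
    l.count b = (l.takeWhile (fun s => s ≠ a)).count b
      + ((l.dropWhile (fun s => s ≠ a)).drop 1).count b := by
  conv_lhs => rw [← List.takeWhile_append_dropWhile (p := fun s => decide (s ≠ a)) (l := l)]
  rw [List.count_append]
  congr 1
  rw [aux_dropWhile_mem a l ha, List.count_cons]
  simp [Ne.symm hab]

lemma aux_count_cross {S : Type} [DecidableEq S] (a b : S) (hab : a ≠ b) :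
    ∀ l : List S, l.Nodup → a ∈ l → b ∈ l →
      (l.takeWhile (fun s => s ≠ a)).count b =
      ((l.dropWhile (fun s => s ≠ b)).drop 1).count a
  | x :: t, hnd, ha, hb => by
    obtain ⟨hx, hnd'⟩ := List.nodup_cons.1 hnd
    by_cases hxa : x = a
    · subst hxa
      rw [List.takeWhile_cons, if_neg (by simp), List.dropWhile_cons,
        if_pos (by simpa using hab)]
      rw [List.count_nil, eq_comm, List.count_eq_zero]
      intro hmem
      exact hx ((t.dropWhile_sublist _).subset (((List.dropWhile _ t).drop_sublist 1).subset hmem))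
    · have hat : a ∈ t := by
        rcases List.mem_cons.1 ha with h' | h'
        · exact absurd h'.symm hxa
        · exact h'
      by_cases hxb : x = b
      · subst hxb
        rw [List.takeWhile_cons, if_pos (by simpa using hxa), List.dropWhile_cons,
          if_neg (by simp), List.drop_one, List.tail_cons, List.count_cons]
        have h0 : (t.takeWhile (fun s => s ≠ a)).count x = 0 :=
          List.count_eq_zero.2 fun hmem => hx ((t.takeWhile_sublist _).subset hmem)
        rw [h0, if_pos (by simp), List.count_eq_one_of_mem hnd' hat]
      · have hbt : b ∈ t := by
          rcases List.mem_cons.1 hb with h' | h'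
          · exact absurd h'.symm hxb
          · exact h'
        rw [List.takeWhile_cons, if_pos (by simpa using hxa), List.dropWhile_cons,
          if_pos (by simpa using hxb), List.count_cons,
          if_neg (by simpa using hxb), add_zero]
        exact aux_count_cross a b hab t hnd' hat hbt

lemma aux_sum_map_flip {S : Type} [DecidableEq S] (α : S → ZMod 2) (b : S) :
    ∀ l : List S, (l.map (flipAt S α b)).sum = (l.map α).sum + (l.count b : ZMod 2)
  | [] => by simp
  | x :: t => by
    simp only [List.map_cons, List.sum_cons, aux_sum_map_flip α b t, List.count_cons, flipAt]
    by_cases hx : x = b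
    · simp only [hx, if_pos rfl, beq_self_eq_true, if_true]
      push_cast
      ring
    · simp only [hx, if_neg hx, beq_iff_eq, if_false]
      ring

lemma preSum_flip {S : Type} [DecidableEq S] (α : S → ZMod 2) (a b : S) (w : OrdWord S) :
    preSum S (flipAt S α b) a w
      = preSum S α a w + ((w.1.takeWhile (fun s => s ≠ a)).count b : ZMod 2) :=
  aux_sum_map_flip α b _

lemma sufSum_flip {S : Type} [DecidableEq S] (α : S → ZMod 2) (a b : S) (w : OrdWord S) :
    sufSum S (flipAt S α b) a w
      = sufSum S α a w + (((w.1.dropWhile (fun s => s ≠ a)).drop 1).count b : ZMod 2) :=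
  aux_sum_map_flip α b _

lemma zmod2_cases (e : ZMod 2) : e = 0 ∨ e = 1 := by revert e; decide

lemma zmod2_solve : ∀ x y : ZMod 2, x + y = 1 → y = x + 1 := by decide

lemma signZ2_zero (k : Type) [CommRing k] : signZ2 k 0 = 1 := by
  simp [signZ2, ZMod.val_zero]

lemma signZ2_one (k : Type) [CommRing k] : signZ2 k 1 = -1 := by
  have : (1 : ZMod 2).val = 1 := rfl
  simp [signZ2, this]

lemma signZ2_add (k : Type) [CommRing k] (e f : ZMod 2) :
    signZ2 k (e + f) = signZ2 k e * signZ2 k f := by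
  rcases zmod2_cases e with rfl | rfl <;> rcases zmod2_cases f with rfl | rfl <;>
    simp [signZ2_zero, signZ2_one, show (1 + 1 : ZMod 2) = 0 by decide]

lemma signZ2_add_one (k : Type) [CommRing k] (e : ZMod 2) :
    signZ2 k (e + 1) = - signZ2 k e := by
  rcases zmod2_cases e with rfl | rfl <;>
    simp [signZ2_zero, signZ2_one, show (1 + 1 : ZMod 2) = 0 by decide]

/-- For distinct `a b ∈ S`: `λ_a λ_b = −λ_b λ_a`, `ρ_a ρ_b = −ρ_b ρ_a`, and
`λ_a ρ_b = ρ_b λ_a` as maps `E_S(α) → E_S(α+a+b)`. -/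
theorem stmt15 (k : Type) [CommRing k] (S : Type) [DecidableEq S] [Fintype S]
    (a b : S) (hab : a ≠ b)
    (α β γ δ : S → ZMod 2)
    (hβ : β = flipAt S α a) (hγ : γ = flipAt S α b)
    (hδ : δ = flipAt S β b) (hδ' : δ = flipAt S γ a)
    (la1 : EMod k S α →ₗ[k] EMod k S β)
    (hla1 : ∀ w, la1 (mkE k S α w) = signZ2 k (preSum S α a w) • mkE k S β w)
    (lb1 : EMod k S α →ₗ[k] EMod k S γ)
    (hlb1 : ∀ w, lb1 (mkE k S α w) = signZ2 k (preSum S α b w) • mkE k S γ w)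
    (lb2 : EMod k S β →ₗ[k] EMod k S δ)
    (hlb2 : ∀ w, lb2 (mkE k S β w) = signZ2 k (preSum S β b w) • mkE k S δ w)
    (la2 : EMod k S γ →ₗ[k] EMod k S δ)
    (hla2 : ∀ w, la2 (mkE k S γ w) = signZ2 k (preSum S γ a w) • mkE k S δ w)
    (ρa1 : EMod k S α →ₗ[k] EMod k S β)
    (hρa1 : ∀ w, ρa1 (mkE k S α w) = signZ2 k (sufSum S α a w) • mkE k S β w)
    (ρb1 : EMod k S α →ₗ[k] EMod k S γ)
    (hρb1 : ∀ w, ρb1 (mkE k S α w) = signZ2 k (sufSum S α b w) • mkE k S γ w)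
    (ρb2 : EMod k S β →ₗ[k] EMod k S δ)
    (hρb2 : ∀ w, ρb2 (mkE k S β w) = signZ2 k (sufSum S β b w) • mkE k S δ w)
    (ρa2 : EMod k S γ →ₗ[k] EMod k S δ)
    (hρa2 : ∀ w, ρa2 (mkE k S γ w) = signZ2 k (sufSum S γ a w) • mkE k S δ w) :
    la2.comp lb1 = -(lb2.comp la1) ∧
    ρa2.comp ρb1 = -(ρb2.comp ρa1) ∧
    la2.comp ρb1 = ρb2.comp la1 := by
  subst hβ hγ hδ
  -- extensionality principle for maps out of `EMod k S α`
  have extE : ∀ {M : Type} [AddCommGroup M] [Module k M] (f g : EMod k S α →ₗ[k] M),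
      (∀ w, f (mkE k S α w) = g (mkE k S α w)) → f = g := by
    intro M _ _ f g h
    refine Submodule.linearMap_qext _ ?_
    refine Finsupp.lhom_ext fun w c => ?_
    have hs : (Finsupp.single w c : OrdWord S →₀ k) = c • Finsupp.single w 1 := by
      rw [Finsupp.smul_single, smul_eq_mul, mul_one]
    simp only [LinearMap.comp_apply, hs, map_smul]
    rw [show (relMod k S α).mkQ (Finsupp.single w 1) = mkE k S α w from rfl, h w]
  -- counting facts for a fixed word
  have facts : ∀ w : OrdWord S,
      ((w.1.takeWhile (fun s => s ≠ a)).count b : ZMod 2)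
        = ((w.1.takeWhile (fun s => s ≠ b)).count a : ZMod 2) + 1 ∧
      (((w.1.dropWhile (fun s => s ≠ a)).drop 1).count b : ZMod 2)
        = (((w.1.dropWhile (fun s => s ≠ b)).drop 1).count a : ZMod 2) + 1 ∧
      ((w.1.takeWhile (fun s => s ≠ a)).count b : ZMod 2)
        = (((w.1.dropWhile (fun s => s ≠ b)).drop 1).count a : ZMod 2) := by
    intro w
    obtain ⟨hnd, hall⟩ := w.2
    have ha := hall a
    have hb := hall b
    have hca : w.1.count a = 1 := List.count_eq_one_of_mem hnd ha
    have hcb : w.1.count b = 1 := List.count_eq_one_of_mem hnd hb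
    have F1 : (w.1.takeWhile (fun s => s ≠ a)).count b
        + ((w.1.dropWhile (fun s => s ≠ a)).drop 1).count b = 1 := by
      rw [← aux_count_split a b (Ne.symm hab) w.1 ha, hcb]
    have F2 : (w.1.takeWhile (fun s => s ≠ b)).count a
        + ((w.1.dropWhile (fun s => s ≠ b)).drop 1).count a = 1 := by
      rw [← aux_count_split b a hab w.1 hb, hca]
    have F3 : (w.1.takeWhile (fun s => s ≠ a)).count b
        = ((w.1.dropWhile (fun s => s ≠ b)).drop 1).count a :=
      aux_count_cross a b hab w.1 hnd ha hb
    have F1' : ((w.1.takeWhile (fun s => s ≠ a)).count b : ZMod 2)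
        + (((w.1.dropWhile (fun s => s ≠ a)).drop 1).count b : ZMod 2) = 1 := by
      exact_mod_cast congrArg (Nat.cast : ℕ → ZMod 2) F1
    have F2' : ((w.1.takeWhile (fun s => s ≠ b)).count a : ZMod 2)
        + (((w.1.dropWhile (fun s => s ≠ b)).drop 1).count a : ZMod 2) = 1 := by
      exact_mod_cast congrArg (Nat.cast : ℕ → ZMod 2) F2
    have F3' : ((w.1.takeWhile (fun s => s ≠ a)).count b : ZMod 2)
        = (((w.1.dropWhile (fun s => s ≠ b)).drop 1).count a : ZMod 2) := by
      exact_mod_cast congrArg (Nat.cast : ℕ → ZMod 2) F3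
    refine ⟨?_, ?_, F3'⟩
    · rw [F3']
      exact zmod2_solve _ _ F2'
    · rw [← F3']
      exact zmod2_solve _ _ F1'
  refine ⟨extE _ _ fun w => ?_, extE _ _ fun w => ?_, extE _ _ fun w => ?_⟩
  · obtain ⟨hcross, -, -⟩ := facts w
    simp only [LinearMap.comp_apply, LinearMap.neg_apply]
    rw [hlb1, map_smul, hla2, hla1, map_smul, hlb2, smul_smul, smul_smul,
      ← signZ2_add, ← neg_smul, ← signZ2_add, ← signZ2_add_one]
    congr 1
    rw [preSum_flip, preSum_flip, hcross]
    ring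
  · obtain ⟨-, hcross, -⟩ := facts w
    simp only [LinearMap.comp_apply, LinearMap.neg_apply]
    rw [hρb1, map_smul, hρa2, hρa1, map_smul, hρb2, smul_smul, smul_smul,
      ← signZ2_add, ← neg_smul, ← signZ2_add, ← signZ2_add_one]
    congr 1
    rw [sufSum_flip, sufSum_flip, hcross]
    ring
  · obtain ⟨-, -, hcross⟩ := facts w
    simp only [LinearMap.comp_apply]
    rw [hρb1, map_smul, hla2, hla1, map_smul, hρb2, smul_smul, smul_smul,
      ← signZ2_add, ← signZ2_add]
    congr 1
    rw [preSum_flip, sufSum_flip, hcross]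
    ring
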